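/- Let Q be a rack and C a maximal R-clique of Q. Then C is a subrack of Q (closed under * and /), and C is a union of equivalence classes of the Cayley kernel relation ≡. -/
import Mathlib


/-- A (right) rack: a set with a binary operation `mul` such that every right
translation `R_x : y ↦ y * x` is a bijection (with inverse given by the right
division `div`), satisfying right self-distributivity. -/
class RightRack (Q : Type*) where
  mul : Q → Q → Q
  div : Q → Q → Q
  div_mul : ∀ x y : Q, mul (div x y) y = x
  mul_div : ∀ x y : Q, div (mul x y) y = x
  self_distrib : ∀ x y z : Q, mul (mul x y) z = mul (mul x z) (mul y z)

namespace RightRack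

/-- The right translation `R_x` as a permutation of `Q`. -/
def rt {Q : Type*} [RightRack Q] (x : Q) : Equiv.Perm Q where
  toFun y := mul y x
  invFun y := div y x
  left_inv y := mul_div y x
  right_inv y := div_mul y x

/-- The right multiplication group `Rmlt(Q)`: the subgroup of the symmetric group
on `Q` generated by all right translations. -/
def rmlt (Q : Type*) [RightRack Q] : Subgroup (Equiv.Perm Q) :=
  Subgroup.closure (Set.range (rt : Q → Equiv.Perm Q))

end RightRack

/-- A quandle: an idempotent rack. -/
class RightQuandle (Q : Type*) extends RightRack Q where
  idem : ∀ x : Q, mul x x = x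

/-- The R-commuting relation: `a ∼ b` iff `R_a ∘ R_b = R_b ∘ R_a`. -/
def rsim {Q : Type*} [RightRack Q] (a b : Q) : Prop :=
  ∀ y : Q, RightRack.mul (RightRack.mul y b) a = RightRack.mul (RightRack.mul y a) b

namespace RightRack
variable {Q : Type*} [RightRack Q]

lemma rt_apply (x y : Q) : rt x y = mul y x := rfl

lemma rt_inv_apply (x y : Q) : (rt x)⁻¹ y = div y x := rfl

lemma rsim_iff_commute (a b : Q) : rsim a b ↔ Commute (rt a) (rt b) := by
  constructor
  · intro h; ext y; exact h y
  · intro h y; exact Equiv.ext_iff.mp h y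

lemma rt_mul (a b : Q) : rt (mul a b) = rt b * rt a * (rt b)⁻¹ := by
  ext y
  show mul y (mul a b) = mul (mul (div y b) a) b
  rw [self_distrib, div_mul]

lemma rt_div (a b : Q) : rt (div a b) = (rt b)⁻¹ * rt a * rt b := by
  have := rt_mul (div a b) b
  rw [div_mul] at this
  rw [this]; group

lemma key {C : Set Q} (hC : ∀ a ∈ C, ∀ b ∈ C, rsim a b)
    (hmax : ∀ D : Set Q, (∀ a ∈ D, ∀ b ∈ D, rsim a b) → C ⊆ D → D = C)
    (x : Q) (hx : ∀ c ∈ C, Commute (rt c) (rt x)) : x ∈ C := by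
  have hD : ∀ a ∈ insert x C, ∀ b ∈ insert x C, rsim a b := by
    rintro a (rfl | ha) b (rfl | hb)
    · exact fun y => rfl
    · exact (rsim_iff_commute _ _).mpr (hx b hb).symm
    · exact (rsim_iff_commute _ _).mpr (hx a ha)
    · exact hC a ha b hb
  have := hmax _ hD (Set.subset_insert _ _)
  rw [← this]; exact Set.mem_insert _ _

end RightRack

open RightRack in
/-- Let `Q` be a rack and `C` a maximal R-clique of `Q` (an R-clique not properly
contained in any other R-clique). Then `C` is a subrack of `Q` (closed under `*`
and `/`), and `C` is a union of equivalence classes of the Cayley kernel relation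
`≡` (where `a ≡ b` iff `R_a = R_b`). -/
theorem maximal_rclique_subrack_and_union_of_cayley_classes {Q : Type*} [RightRack Q]
    (C : Set Q) (hC : ∀ a ∈ C, ∀ b ∈ C, rsim a b)
    (hmax : ∀ D : Set Q, (∀ a ∈ D, ∀ b ∈ D, rsim a b) → C ⊆ D → D = C) :
    ((∀ a ∈ C, ∀ b ∈ C, RightRack.mul a b ∈ C) ∧
      (∀ a ∈ C, ∀ b ∈ C, RightRack.div a b ∈ C)) ∧
      (∀ a ∈ C, ∀ b : Q,
        (∀ y : Q, RightRack.mul y a = RightRack.mul y b) → b ∈ C) := by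
  open RightRack in
  have comm : ∀ a ∈ C, ∀ b ∈ C, ∀ c ∈ C, Commute (rt c) (rt b * rt a * (rt b)⁻¹) := by
    intro a ha b hb c hc
    have h1 := (rsim_iff_commute c a).mp (hC c hc a ha)
    have h2 := (rsim_iff_commute c b).mp (hC c hc b hb)
    exact (h2.mul_right h1).mul_right h2.inv_right
  refine ⟨⟨?_, ?_⟩, ?_⟩
  · intro a ha b hb
    exact RightRack.key hC hmax _ (fun c hc => by rw [RightRack.rt_mul]; exact comm a ha b hb c hc)
  · intro a ha b hb
    refine RightRack.key hC hmax _ (fun c hc => ?_)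
    rw [RightRack.rt_div]
    have h1 := (rsim_iff_commute c a).mp (hC c hc a ha)
    have h2 := (rsim_iff_commute c b).mp (hC c hc b hb)
    exact (h2.inv_right.mul_right h1).mul_right h2
  · intro a ha b hab
    refine RightRack.key hC hmax _ (fun c hc => ?_)
    have : RightRack.rt b = RightRack.rt a := by ext y; exact (hab y).symm
    rw [this]
    exact (rsim_iff_commute c a).mp (hC c hc a ha)
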